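/- Let p ≥ 3 be a prime, V₁ = { ∑_{k=0}^∞ a_k p^k : a ∈ {0,1}^ℕ } and W₁ = { ∑_{k=0}^∞ a_k p^k : a ∈ {0,2}^ℕ }, regarded as subsets of ℚ_p, and let V₂, W₂ ⊆ ℚ_p be disjoint nonempty compact open sets. Set U = (V₁ × V₂) ∪ (W₁ × W₂) ⊆ ℚ_p × ℚ_p. Then there do not exist x, y ∈ ℚ_p, v₂ ∈ V₂ and w₂ ∈ W₂ such that x ≠ y and all four points (x,v₂), (x,w₂), (y,v₂), (y,w₂) belong to U. -/

import Mathlib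

open Finset IsUltrametricDist

private lemma summable_digits {p : ℕ} [Fact p.Prime] (a : ℕ → ℕ) :
    Summable (fun k => (a k : ℚ_[p]) * (p : ℚ_[p]) ^ k) := by
  have hp1 : (1:ℝ) < p := by exact_mod_cast (Fact.out : p.Prime).one_lt
  apply Summable.of_norm_bounded (g := fun k => ((p:ℝ)⁻¹)^k)
  · exact summable_geometric_of_lt_one (by positivity) (inv_lt_one_of_one_lt₀ hp1)
  · intro k
    rw [norm_mul, norm_pow, Padic.norm_p]
    calc ‖((a k : ℤ) : ℚ_[p])‖ * ((p:ℝ)⁻¹)^k ≤ 1 * ((p:ℝ)⁻¹)^k := by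
          apply mul_le_mul_of_nonneg_right (Padic.norm_int_le_one _) (by positivity)
      _ = _ := one_mul _

private lemma norm_term_le {p : ℕ} [Fact p.Prime] (c : ℕ) (m n : ℕ) (hmn : n ≤ m) :
    ‖(c : ℚ_[p]) * (p : ℚ_[p]) ^ m‖ ≤ ((p:ℝ)⁻¹) ^ n := by
  have hp1 : (1:ℝ) < p := by exact_mod_cast (Fact.out : p.Prime).one_lt
  rw [norm_mul, norm_pow, Padic.norm_p]
  calc ‖((c : ℤ) : ℚ_[p])‖ * ((p:ℝ)⁻¹)^m ≤ 1 * ((p:ℝ)⁻¹)^m := by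
        apply mul_le_mul_of_nonneg_right (Padic.norm_int_le_one _) (by positivity)
    _ = ((p:ℝ)⁻¹)^m := one_mul _
    _ ≤ ((p:ℝ)⁻¹)^n :=
        pow_le_pow_of_le_one (by positivity) (le_of_lt (inv_lt_one_of_one_lt₀ hp1)) hmn

private lemma norm_tail_le {p : ℕ} [Fact p.Prime] (a : ℕ → ℕ) (n : ℕ) :
    ‖∑' i : ℕ, (a (i + n) : ℚ_[p]) * (p : ℚ_[p]) ^ (i + n)‖ ≤ ((p:ℝ)⁻¹) ^ n := by
  refine (norm_tsum_le _).trans (ciSup_le fun i => ?_)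
  exact norm_term_le _ _ _ (Nat.le_add_left n i)

set_option maxHeartbeats 1000000 in
private lemma digits_all_zero {p : ℕ} [Fact p.Prime] (hp : 3 ≤ p) (a b : ℕ → ℕ)
    (ha : ∀ k, a k = 0 ∨ a k = 1) (hb : ∀ k, b k = 0 ∨ b k = 2)
    (h : ∑' k : ℕ, (a k : ℚ_[p]) * (p : ℚ_[p]) ^ k
        = ∑' k : ℕ, (b k : ℚ_[p]) * (p : ℚ_[p]) ^ k) :
    ∀ k, a k = 0 ∧ b k = 0 := by
  have hp1 : (1:ℝ) < p := by exact_mod_cast (Fact.out : p.Prime).one_lt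
  intro n
  induction n using Nat.strong_induction_on with
  | _ n ih =>
    have hta := Summable.sum_add_tsum_nat_add (f := fun k => (a k : ℚ_[p]) * (p : ℚ_[p]) ^ k) (n+1)
      (summable_digits a)
    have htb := Summable.sum_add_tsum_nat_add (f := fun k => (b k : ℚ_[p]) * (p : ℚ_[p]) ^ k) (n+1)
      (summable_digits b)
    have hsum_a : ∑ i ∈ Finset.range (n+1), (a i : ℚ_[p]) * (p : ℚ_[p]) ^ i
        = (a n : ℚ_[p]) * (p : ℚ_[p]) ^ n := by
      rw [Finset.sum_range_succ]
      have hz : ∀ i ∈ Finset.range n, (a i : ℚ_[p]) * (p : ℚ_[p]) ^ i = 0 := fun i hi => by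
        rw [(ih i (Finset.mem_range.mp hi)).1]; simp
      rw [Finset.sum_congr rfl hz]; simp
    have hsum_b : ∑ i ∈ Finset.range (n+1), (b i : ℚ_[p]) * (p : ℚ_[p]) ^ i
        = (b n : ℚ_[p]) * (p : ℚ_[p]) ^ n := by
      rw [Finset.sum_range_succ]
      have hz : ∀ i ∈ Finset.range n, (b i : ℚ_[p]) * (p : ℚ_[p]) ^ i = 0 := fun i hi => by
        rw [(ih i (Finset.mem_range.mp hi)).2]; simp
      rw [Finset.sum_congr rfl hz]; simp
    rw [hsum_a] at hta
    rw [hsum_b] at htb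
    have key : ((a n : ℚ_[p]) - (b n : ℚ_[p])) * (p : ℚ_[p]) ^ n
        = (∑' i : ℕ, (b (i + (n+1)) : ℚ_[p]) * (p : ℚ_[p]) ^ (i + (n+1)))
          - (∑' i : ℕ, (a (i + (n+1)) : ℚ_[p]) * (p : ℚ_[p]) ^ (i + (n+1))) := by
      linear_combination hta - htb + h
    have hnorm : ‖((a n : ℚ_[p]) - (b n : ℚ_[p])) * (p : ℚ_[p]) ^ n‖ ≤ ((p:ℝ)⁻¹) ^ (n+1) := by
      rw [key]
      rw [sub_eq_add_neg]
      refine (norm_add_le_max _ _).trans ?_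
      rw [norm_neg]
      exact max_le (norm_tail_le b (n+1)) (norm_tail_le a (n+1))
    have h3 : ‖(a n : ℚ_[p]) - (b n : ℚ_[p])‖ ≤ (p:ℝ)⁻¹ := by
      have hpow : (0:ℝ) < ((p:ℝ)⁻¹) ^ n := by positivity
      refine le_of_mul_le_mul_right ?_ hpow
      calc ‖(a n : ℚ_[p]) - (b n : ℚ_[p])‖ * ((p:ℝ)⁻¹) ^ n
          = ‖((a n : ℚ_[p]) - (b n : ℚ_[p])) * (p:ℚ_[p]) ^ n‖ := by
            rw [norm_mul, norm_pow, Padic.norm_p]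
        _ ≤ ((p:ℝ)⁻¹) ^ (n+1) := hnorm
        _ = (p:ℝ)⁻¹ * ((p:ℝ)⁻¹) ^ n := pow_succ' _ _
    obtain ⟨m, hm⟩ : ∃ m : ℤ, m = (a n : ℤ) - (b n : ℤ) := ⟨_, rfl⟩
    have hlt : ‖(m : ℚ_[p])‖ < 1 := by
      have hc : ((m : ℤ) : ℚ_[p]) = (a n : ℚ_[p]) - (b n : ℚ_[p]) := by
        rw [hm]; push_cast; ring
      rw [hc]
      exact lt_of_le_of_lt h3 (inv_lt_one_of_one_lt₀ hp1)
    have hdvd : (p:ℤ) ∣ ((a n : ℤ) - (b n : ℤ)) :=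
      hm ▸ (Padic.norm_intCast_lt_one_iff (k := m)).mp hlt
    rcases ha n with h1 | h1 <;> rcases hb n with h2 | h2 <;> rw [h1, h2] at hdvd ⊢
    · exact ⟨rfl, rfl⟩
    · exfalso
      have : (p:ℤ) ∣ 2 := by simpa using hdvd.neg_right
      have := Int.le_of_dvd (by norm_num) this
      omega
    · exfalso
      have : (p:ℤ) ∣ 1 := by simpa using hdvd
      have := Int.le_of_dvd (by norm_num) this
      omega
    · exfalso
      have : (p:ℤ) ∣ 1 := by simpa using hdvd.neg_right
      have := Int.le_of_dvd (by norm_num) this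
      omega

private lemma mem_both_eq_zero {p : ℕ} [Fact p.Prime] (hp : 3 ≤ p) {x : ℚ_[p]}
    (hxa : ∃ a : ℕ → ℕ, (∀ k, a k = 0 ∨ a k = 1) ∧
      x = ∑' k : ℕ, (a k : ℚ_[p]) * (p : ℚ_[p]) ^ k)
    (hxb : ∃ a : ℕ → ℕ, (∀ k, a k = 0 ∨ a k = 2) ∧
      x = ∑' k : ℕ, (a k : ℚ_[p]) * (p : ℚ_[p]) ^ k) : x = 0 := by
  obtain ⟨a, ha, hxa⟩ := hxa
  obtain ⟨b, hb, hxb⟩ := hxb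
  have hz := digits_all_zero hp a b ha hb (hxa ▸ hxb ▸ rfl)
  rw [hxa]
  have : ∀ k : ℕ, (a k : ℚ_[p]) * (p : ℚ_[p]) ^ k = 0 := fun k => by rw [(hz k).1]; simp
  simp [this]

theorem no_distinct_configuration (p : ℕ) [Fact p.Prime] (hp : 3 ≤ p)
    (V₁ W₁ : Set ℚ_[p])
    (hV₁ : V₁ = {x | ∃ a : ℕ → ℕ, (∀ k, a k = 0 ∨ a k = 1) ∧
      x = ∑' k : ℕ, (a k : ℚ_[p]) * (p : ℚ_[p]) ^ k})
    (hW₁ : W₁ = {x | ∃ a : ℕ → ℕ, (∀ k, a k = 0 ∨ a k = 2) ∧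
      x = ∑' k : ℕ, (a k : ℚ_[p]) * (p : ℚ_[p]) ^ k})
    (V₂ W₂ : Set ℚ_[p])
    (hV₂c : IsCompact V₂) (hV₂o : IsOpen V₂) (hV₂ne : V₂.Nonempty)
    (hW₂c : IsCompact W₂) (hW₂o : IsOpen W₂) (hW₂ne : W₂.Nonempty)
    (hdisj : Disjoint V₂ W₂)
    (U : Set (ℚ_[p] × ℚ_[p])) (hU : U = (V₁ ×ˢ V₂) ∪ (W₁ ×ˢ W₂)) :
    ¬ ∃ (x y v₂ w₂ : ℚ_[p]), v₂ ∈ V₂ ∧ w₂ ∈ W₂ ∧ x ≠ y ∧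
        (x, v₂) ∈ U ∧ (x, w₂) ∈ U ∧ (y, v₂) ∈ U ∧ (y, w₂) ∈ U := by
  rintro ⟨x, y, v₂, w₂, hv₂, hw₂, hxy, hxv, hxw, hyv, hyw⟩
  subst hU
  have hVmem : ∀ z : ℚ_[p], (z, v₂) ∈ (V₁ ×ˢ V₂) ∪ (W₁ ×ˢ W₂) → z ∈ V₁ := by
    rintro z (⟨hz, _⟩ | ⟨_, hz2⟩)
    · exact hz
    · exact absurd hz2 (Set.disjoint_left.mp hdisj hv₂)
  have hWmem : ∀ z : ℚ_[p], (z, w₂) ∈ (V₁ ×ˢ V₂) ∪ (W₁ ×ˢ W₂) → z ∈ W₁ := by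
    rintro z (⟨_, hz2⟩ | ⟨hz, _⟩)
    · exact absurd hw₂ (Set.disjoint_left.mp hdisj hz2)
    · exact hz
  have hxV := hVmem x hxv
  have hxW := hWmem x hxw
  have hyV := hVmem y hyv
  have hyW := hWmem y hyw
  rw [hV₁, Set.mem_setOf_eq] at hxV hyV
  rw [hW₁, Set.mem_setOf_eq] at hxW hyW
  have hx0 : x = 0 := mem_both_eq_zero hp hxV hxW
  have hy0 : y = 0 := mem_both_eq_zero hp hyV hyW
  exact hxy (hx0.trans hy0.symm)
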